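/- Let N be a nonempty finite set and let f : 2^N → ℝ ∪ {-∞} be a set function whose effective domain dom f is nonempty, consists of equi-cardinal sets, and is connected, and which satisfies the local exchange property: for any X, Y ∈ dom f with |X \ Y| = 2 there exist i ∈ X \ Y and j ∈ Y \ X with f(X) + f(Y) ≤ f(X − i + j) + f(Y + i − j). Then for every p ∈ ℝ^N, every X ∈ dom f, and every Y ⊆ N with X \ Y = {i_0, i_1} and Y \ X = {j_0, j_1} (i_0 ≠ i_1, j_0 ≠ j_1, |X| = |Y|), it holds that f_p(Y) − f_p(X) ≤ max{ f_p(X, i_0, j_0) + f_p(X, i_1, j_1), f_p(X, i_0, j_1) + f_p(X, i_1, j_0) }, where f_p(X) = f(X) + p(X) and f_p(X, i, j) = f_p(X − i + j) − f_p(X) (interpreted as −∞ when X − i + j ∉ dom f, and the inequality holds trivially with f_p(Y) = −∞ when Y ∉ dom f). -/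
import Mathlib
open Finset

private lemma aux_set' {N : Type*} [DecidableEq N] {X Y : Finset N} {i₀ i₁ j₀ j₁ : N}
    (hii : i₀ ≠ i₁) (hjj : j₀ ≠ j₁)
    (hXY : X \ Y = {i₀, i₁}) (hYX : Y \ X = {j₀, j₁}) :
    (insert i₀ Y).erase j₀ = insert j₁ (X.erase i₁) := by
  have hA : ∀ a, a ∈ X ∧ a ∉ Y ↔ (a = i₀ ∨ a = i₁) := by
    intro a; rw [← Finset.mem_sdiff, hXY]; simp
  have hB : ∀ a, a ∈ Y ∧ a ∉ X ↔ (a = j₀ ∨ a = j₁) := by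
    intro a; rw [← Finset.mem_sdiff, hYX]; simp
  have hi0X : i₀ ∈ X := ((hA i₀).2 (Or.inl rfl)).1
  have hi0Y : i₀ ∉ Y := ((hA i₀).2 (Or.inl rfl)).2
  have hi1X : i₁ ∈ X := ((hA i₁).2 (Or.inr rfl)).1
  have hi1Y : i₁ ∉ Y := ((hA i₁).2 (Or.inr rfl)).2
  have hj0Y : j₀ ∈ Y := ((hB j₀).2 (Or.inl rfl)).1
  have hj0X : j₀ ∉ X := ((hB j₀).2 (Or.inl rfl)).2
  have hj1Y : j₁ ∈ Y := ((hB j₁).2 (Or.inr rfl)).1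
  have hj1X : j₁ ∉ X := ((hB j₁).2 (Or.inr rfl)).2
  ext a
  simp only [mem_erase, mem_insert]
  have h1 := hA a
  have h2 := hB a
  clear hA hB
  by_cases h0 : a = i₀ <;> by_cases hh1 : a = i₁ <;> by_cases h2' : a = j₀ <;>
    by_cases h3 : a = j₁ <;> subst_vars <;> simp_all <;> tauto

private lemma psum' {N : Type*} [DecidableEq N] (p : N → ℝ) {X : Finset N} {i j : N}
    (hi : i ∈ X) (hj : j ∉ X) :
    ∑ a ∈ insert j (X.erase i), p a = ∑ a ∈ X, p a - p i + p j := by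
  rw [Finset.sum_insert (fun h => hj (Finset.mem_of_mem_erase h)),
    Finset.sum_erase_eq_sub hi]
  ring

private lemma main_step' {N : Type*} [DecidableEq N] (f : Finset N → WithBot ℝ) (p : N → ℝ)
    {X Y : Finset N} {i₀ i₁ j₀ j₁ : N} (hii : i₀ ≠ i₁) (hjj : j₀ ≠ j₁)
    (hXY : X \ Y = {i₀, i₁}) (hYX : Y \ X = {j₀, j₁})
    (hle : f X + f Y ≤ f (insert j₀ (X.erase i₀)) + f ((insert i₀ Y).erase j₀)) :
    (f Y + ((∑ i ∈ Y, p i : ℝ) : WithBot ℝ)) + (f X + ((∑ i ∈ X, p i : ℝ) : WithBot ℝ)) ≤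
      (f (insert j₀ (X.erase i₀)) + ((∑ i ∈ insert j₀ (X.erase i₀), p i : ℝ) : WithBot ℝ)) +
      (f (insert j₁ (X.erase i₁)) + ((∑ i ∈ insert j₁ (X.erase i₁), p i : ℝ) : WithBot ℝ)) := by
  have hA : ∀ a, a ∈ X ∧ a ∉ Y ↔ (a = i₀ ∨ a = i₁) := by
    intro a; rw [← Finset.mem_sdiff, hXY]; simp
  have hB : ∀ a, a ∈ Y ∧ a ∉ X ↔ (a = j₀ ∨ a = j₁) := by
    intro a; rw [← Finset.mem_sdiff, hYX]; simp
  have hi0X : i₀ ∈ X := ((hA i₀).2 (Or.inl rfl)).1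
  have hi1X : i₁ ∈ X := ((hA i₁).2 (Or.inr rfl)).1
  have hj0X : j₀ ∉ X := ((hB j₀).2 (Or.inl rfl)).2
  have hj1X : j₁ ∉ X := ((hB j₁).2 (Or.inr rfl)).2
  rw [aux_set' hii hjj hXY hYX] at hle
  -- sum identity
  have e1 : ∑ a ∈ X \ Y, p a + ∑ a ∈ X ∩ Y, p a = ∑ a ∈ X, p a := by
    rw [← Finset.sdiff_inter_self_left X Y]
    exact Finset.sum_sdiff (Finset.inter_subset_left)
  have e2 : ∑ a ∈ Y \ X, p a + ∑ a ∈ Y ∩ X, p a = ∑ a ∈ Y, p a := by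
    rw [← Finset.sdiff_inter_self_left Y X]
    exact Finset.sum_sdiff (Finset.inter_subset_left)
  rw [Finset.inter_comm] at e2
  rw [hXY, Finset.sum_pair hii] at e1
  rw [hYX, Finset.sum_pair hjj] at e2
  have esum : (∑ i ∈ Y, p i) + (∑ i ∈ X, p i) =
      (∑ i ∈ insert j₀ (X.erase i₀), p i) + (∑ i ∈ insert j₁ (X.erase i₁), p i) := by
    rw [psum' p hi0X hj0X, psum' p hi1X hj1X]; linarith
  calc (f Y + ((∑ i ∈ Y, p i : ℝ) : WithBot ℝ)) + (f X + ((∑ i ∈ X, p i : ℝ) : WithBot ℝ))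
      = (f X + f Y) + (((∑ i ∈ Y, p i) + (∑ i ∈ X, p i) : ℝ) : WithBot ℝ) := by
        rw [add_add_add_comm, WithBot.coe_add, add_comm (f Y)]
    _ ≤ (f (insert j₀ (X.erase i₀)) + f (insert j₁ (X.erase i₁))) +
        (((∑ i ∈ insert j₀ (X.erase i₀), p i) + (∑ i ∈ insert j₁ (X.erase i₁), p i) : ℝ) :
          WithBot ℝ) := by
        exact add_le_add hle (le_of_eq (by rw [esum]))
    _ = _ := by rw [add_add_add_comm, WithBot.coe_add]

theorem local_exchange_upper_bound
    {N : Type*} [Fintype N] [DecidableEq N] [Nonempty N]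
    (f : Finset N → WithBot ℝ) (hdom : ∃ X : Finset N, f X ≠ ⊥)
    (hequi : ∀ X Y : Finset N, f X ≠ ⊥ → f Y ≠ ⊥ → X.card = Y.card)
    (hconn : ∀ X Y : Finset N, f X ≠ ⊥ → f Y ≠ ⊥ → X ≠ Y →
      ∃ i ∈ X \ Y, ∃ j ∈ Y \ X, f ((insert i Y).erase j) ≠ ⊥)
    (hexc : ∀ X Y : Finset N, f X ≠ ⊥ → f Y ≠ ⊥ → (X \ Y).card = 2 →
      ∃ i ∈ X \ Y, ∃ j ∈ Y \ X,
        f X + f Y ≤ f (insert j (X.erase i)) + f ((insert i Y).erase j)) :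
    ∀ p : N → ℝ, ∀ X Y : Finset N, f X ≠ ⊥ →
      ∀ i₀ i₁ j₀ j₁ : N, i₀ ≠ i₁ → j₀ ≠ j₁ →
        X \ Y = {i₀, i₁} → Y \ X = {j₀, j₁} → X.card = Y.card →
        (f Y + ((∑ i ∈ Y, p i : ℝ) : WithBot ℝ)) +
            (f X + ((∑ i ∈ X, p i : ℝ) : WithBot ℝ)) ≤
          max
            ((f (insert j₀ (X.erase i₀)) +
                ((∑ i ∈ insert j₀ (X.erase i₀), p i : ℝ) : WithBot ℝ)) +
              (f (insert j₁ (X.erase i₁)) +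
                ((∑ i ∈ insert j₁ (X.erase i₁), p i : ℝ) : WithBot ℝ)))
            ((f (insert j₁ (X.erase i₀)) +
                ((∑ i ∈ insert j₁ (X.erase i₀), p i : ℝ) : WithBot ℝ)) +
              (f (insert j₀ (X.erase i₁)) +
                ((∑ i ∈ insert j₀ (X.erase i₁), p i : ℝ) : WithBot ℝ))) := by
  intro p X Y hX i₀ i₁ j₀ j₁ hii hjj hXY hYX hcard
  by_cases hY : f Y = ⊥
  · rw [hY]
    simp
  have hcard2 : (X \ Y).card = 2 := by
    rw [hXY, Finset.card_insert_of_notMem (by simpa using hii), Finset.card_singleton]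
  obtain ⟨i, hi, j, hj, hle⟩ := hexc X Y hX hY hcard2
  rw [hXY] at hi
  rw [hYX] at hj
  simp only [Finset.mem_insert, Finset.mem_singleton] at hi hj
  rcases hi with rfl | rfl <;> rcases hj with rfl | rfl
  · exact le_trans (main_step' f p hii hjj hXY hYX hle) (le_max_left _ _)
  · exact le_trans (main_step' f p hii hjj.symm hXY (by rw [hYX, Finset.pair_comm]) hle)
      (le_max_right _ _)
  · refine le_trans (main_step' f p hii.symm hjj (by rw [hXY, Finset.pair_comm]) hYX hle) ?_
    rw [add_comm]
    exact le_max_right _ _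
  · refine le_trans (main_step' f p hii.symm hjj.symm (by rw [hXY, Finset.pair_comm])
      (by rw [hYX, Finset.pair_comm]) hle) ?_
    rw [add_comm]
    exact le_max_left _ _
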